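/- arXiv:1404.0111 — 2 statements merged into one kernel-verified Lean document; each statement's English description precedes it below -/
import Mathlib

section
/- Let φ: (R, m) → (S, n) be a flat local homomorphism of Noetherian local rings with dim(S/mS) = 0, and let A be an Artinian R-module. Then Att_R(A) = { φ^{-1}(P) : P ∈ Att_S(A ⊗_R S) }. -/
open IsLocalRing TensorProduct

noncomputable section

/-- A module is `p`-secondary: every `x : R` acts surjectively or nilpotently,
and the radical of the annihilator is `p`. -/
def IsSecondary (R : Type) [CommRing R] (M : Type) [AddCommGroup M] [Module R M]
    (p : Ideal R) : Prop :=
  (Module.annihilator R M).radical = p ∧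
    ∀ x : R, Function.Surjective (fun m : M => x • m) ∨ ∃ n : ℕ, ∀ m : M, x ^ n • m = 0

/-- The attached primes of a module: primes `p` such that the module has a
`p`-secondary quotient (for representable, e.g. Artinian, modules this agrees
with the primes occurring in a minimal secondary representation). -/
def attachedPrimes (R : Type) [CommRing R] (M : Type) [AddCommGroup M] [Module R M] :
    Set (Ideal R) :=
  {p | p.IsPrime ∧ ∃ N : Submodule R M, IsSecondary R (M ⧸ N) p}

/-- The `i`-th local cohomology module of `M` with support in `J`. -/
def H (R : Type) [CommRing R] (J : Ideal R) (i : ℕ) (M : Type) [AddCommGroup M]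
    [Module R M] : ModuleCat R :=
  (localCohomology J i).obj (ModuleCat.of R M)

/-- The Krull dimension of a module, as `dim (R / Ann M)`. -/
def mDim (R : Type) [CommRing R] (M : Type) [AddCommGroup M] [Module R M] : WithBot ℕ∞ :=
  ringKrullDim (R ⧸ Module.annihilator R M)

section Helpers

variable {T : Type} [CommRing T]

/-- `IsSecondary` transports along linear equivalences. -/
lemma isSecondary_of_equiv {M N : Type} [AddCommGroup M] [Module T M] [AddCommGroup N]
    [Module T N] (e : M ≃ₗ[T] N) {p : Ideal T} (h : IsSecondary T M p) : IsSecondary T N p := by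
  obtain ⟨hrad, hd⟩ := h
  have hann : Module.annihilator T N = Module.annihilator T M := by
    ext a
    simp only [Module.mem_annihilator]
    constructor
    · intro h m
      apply e.injective
      rw [map_smul, h (e m), map_zero]
    · intro h n
      obtain ⟨m, rfl⟩ := e.surjective n
      rw [← map_smul, h m, map_zero]
  constructor
  · rw [hann, hrad]
  · intro x
    rcases hd x with hs | ⟨n, hn⟩
    · left
      intro m
      obtain ⟨m', hm'⟩ := hs (e.symm m)
      refine ⟨e m', ?_⟩
      show x • e m' = m
      rw [← map_smul]
      have : x • m' = e.symm m := hm'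
      rw [this, e.apply_symm_apply]
    · right
      refine ⟨n, fun m => ?_⟩
      obtain ⟨m', rfl⟩ := e.surjective m
      rw [← map_smul, hn m', map_zero]

/-- Attached primes of a quotient (target of a surjection) are attached primes of the source. -/
lemma attachedPrimes_subset_of_surjective {M N : Type} [AddCommGroup M] [Module T M]
    [AddCommGroup N] [Module T N] (f : M →ₗ[T] N) (hf : Function.Surjective f) :
    attachedPrimes T N ⊆ attachedPrimes T M := by
  rintro p ⟨hp, V, hsec⟩
  have hs : Function.Surjective (V.mkQ.comp f) := V.mkQ_surjective.comp hf
  exact ⟨hp, LinearMap.ker (V.mkQ.comp f),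
    isSecondary_of_equiv (LinearMap.quotKerEquivOfSurjective _ hs).symm hsec⟩

/-- An Artinian module whose annihilator has prime radical `p` has `p` as an attached prime. -/
lemma attached_of_radical_eq_prime {M : Type} [AddCommGroup M] [Module T M] [IsArtinian T M]
    {p : Ideal T} (hp : p.IsPrime) (hrad : (Module.annihilator T M).radical = p) :
    p ∈ attachedPrimes T M := by
  have hAnn_le : Module.annihilator T M ≤ p := hrad ▸ Ideal.le_radical
  have h1p : (1 : T) ∉ p := fun h => hp.ne_top ((Ideal.eq_top_iff_one p).mpr h)
  set F : Set (Submodule T M) :=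
    {W | ∃ y, y ∉ p ∧ W = LinearMap.range (LinearMap.lsmul T M y)} with hF
  obtain ⟨W₀, hW₀F, hmin⟩ := IsArtinian.set_has_minimal F ⟨_, 1, h1p, rfl⟩
  obtain ⟨y₀, hy₀, hW₀⟩ := hW₀F
  have key : ∀ y, y ∉ p → ∀ m : M, ∃ m', y₀ • (y • m') = y₀ • m := by
    intro y hy m
    have hmul : (y * y₀) ∉ p := fun h => ((hp.mem_or_mem h).elim hy hy₀)
    have hle : LinearMap.range (LinearMap.lsmul T M (y * y₀)) ≤ W₀ := by
      rw [hW₀]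
      rintro _ ⟨m', rfl⟩
      refine ⟨y • m', ?_⟩
      rw [LinearMap.lsmul_apply, LinearMap.lsmul_apply, smul_smul, mul_comm y₀ y]
    have hWeq : LinearMap.range (LinearMap.lsmul T M (y * y₀)) = W₀ :=
      eq_of_le_of_not_lt hle (hmin _ ⟨y * y₀, hmul, rfl⟩)
    have hmem : y₀ • m ∈ W₀ := by
      rw [hW₀]
      exact ⟨m, LinearMap.lsmul_apply y₀ m⟩
    rw [← hWeq] at hmem
    obtain ⟨m', hm'⟩ := hmem
    rw [LinearMap.lsmul_apply] at hm'
    refine ⟨m', ?_⟩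
    rw [smul_smul, mul_comm y₀ y, hm']
  refine ⟨hp, LinearMap.ker (LinearMap.lsmul T M y₀), ?_, ?_⟩
  · -- radical of annihilator of quotient is p
    apply le_antisymm
    · intro a ha
      obtain ⟨u, hu⟩ := Ideal.mem_radical_iff.mp ha
      rw [Module.mem_annihilator] at hu
      have hy : y₀ * a ^ u ∈ Module.annihilator T M := by
        rw [Module.mem_annihilator]
        intro m
        have h2 := hu (Submodule.Quotient.mk m)
        rw [← Submodule.Quotient.mk_smul, Submodule.Quotient.mk_eq_zero, LinearMap.mem_ker,
          LinearMap.lsmul_apply] at h2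
        rw [mul_smul]
        exact h2
      rcases hp.mem_or_mem (hAnn_le hy) with h | h
      · exact absurd h hy₀
      · exact hp.mem_of_pow_mem u h
    · intro x hx
      rw [← hrad] at hx
      obtain ⟨u, hu⟩ := Ideal.mem_radical_iff.mp hx
      rw [Module.mem_annihilator] at hu
      refine Ideal.mem_radical_iff.mpr ⟨u, ?_⟩
      rw [Module.mem_annihilator]
      intro mq
      obtain ⟨m, rfl⟩ := Submodule.Quotient.mk_surjective _ mq
      rw [← Submodule.Quotient.mk_smul, hu m, Submodule.Quotient.mk_zero]
  · intro x
    by_cases hx : x ∈ p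
    · right
      rw [← hrad] at hx
      obtain ⟨u, hu⟩ := Ideal.mem_radical_iff.mp hx
      rw [Module.mem_annihilator] at hu
      refine ⟨u, fun mq => ?_⟩
      obtain ⟨m, rfl⟩ := Submodule.Quotient.mk_surjective _ mq
      rw [← Submodule.Quotient.mk_smul, hu m, Submodule.Quotient.mk_zero]
    · left
      intro mq
      obtain ⟨m, rfl⟩ := Submodule.Quotient.mk_surjective _ mq
      obtain ⟨m', hm'⟩ := key x hx m
      refine ⟨Submodule.Quotient.mk m', ?_⟩
      show x • (Submodule.Quotient.mk m' : M ⧸ _) = Submodule.Quotient.mk m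
      rw [← Submodule.Quotient.mk_smul, Submodule.Quotient.eq, LinearMap.mem_ker,
        LinearMap.lsmul_apply, smul_sub, hm', sub_self]

lemma smul_surj_mul {M : Type} [AddCommGroup M] [Module T M] (y z : T)
    (hy : Function.Surjective (fun m : M => y • m))
    (hz : Function.Surjective (fun m : M => z • m)) :
    Function.Surjective (fun m : M => (y * z) • m) := by
  intro m
  obtain ⟨m1, h1⟩ := hy m
  obtain ⟨m2, h2⟩ := hz m1
  refine ⟨m2, ?_⟩
  show (y * z) • m2 = m
  rw [mul_smul]
  rw [show z • m2 = m1 from h2]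
  exact h1

lemma smul_surj_pow {M : Type} [AddCommGroup M] [Module T M] (y : T)
    (h : Function.Surjective (fun m : M => y • m)) (n : ℕ) :
    Function.Surjective (fun m : M => y ^ n • m) := by
  induction n with
  | zero => exact fun m => ⟨m, by simp⟩
  | succ k ih =>
      intro m
      obtain ⟨m1, h1⟩ := h m
      obtain ⟨m2, h2⟩ := ih m1
      refine ⟨m2, ?_⟩
      show y ^ (k + 1) • m2 = m
      rw [pow_succ', mul_smul]
      rw [show y ^ k • m2 = m1 from h2]
      exact h1

/-- Over a Noetherian ring, every nontrivial module has a secondary quotient. -/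
lemma exists_attached_isSecondary [IsNoetherianRing T] (M : Type) [AddCommGroup M] [Module T M]
    [Nontrivial M] :
    ∃ (P : Ideal T) (V : Submodule T M), V ≠ ⊤ ∧ P.IsPrime ∧ IsSecondary T (M ⧸ V) P := by
  have hannq : ∀ (W : Submodule T M) (a : T),
      a ∈ Module.annihilator T (M ⧸ W) ↔ ∀ m : M, a • m ∈ W := by
    intro W a
    rw [Module.mem_annihilator]
    constructor
    · intro h m
      have := h (Submodule.Quotient.mk m)
      rwa [← Submodule.Quotient.mk_smul, Submodule.Quotient.mk_eq_zero] at this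
    · intro h mq
      obtain ⟨m, rfl⟩ := Submodule.Quotient.mk_surjective _ mq
      rw [← Submodule.Quotient.mk_smul, Submodule.Quotient.mk_eq_zero]
      exact h m
  set 𝒜 : Set (Ideal T) :=
    {I | ∃ V : Submodule T M, V ≠ ⊤ ∧ Module.annihilator T (M ⧸ V) = I} with h𝒜
  have hne : 𝒜.Nonempty := ⟨_, ⊥, bot_ne_top, rfl⟩
  obtain ⟨I, hI𝒜, hmax⟩ := (set_has_maximal_iff_noetherian.mpr inferInstance) 𝒜 hne
  obtain ⟨V, hV, hIV⟩ := hI𝒜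
  -- dichotomy: y is either "eventually in I" or acts surjectively on M ⧸ V
  have hdich : ∀ y : T, (∀ u : ℕ, y ^ u ∉ I) →
      Function.Surjective (fun m : M ⧸ V => y • m) := by
    intro y hy
    set Vy : Submodule T M := V ⊔ Submodule.map (LinearMap.lsmul T M y) ⊤ with hVy
    have htop : Vy = ⊤ := by
      by_contra hne'
      have hyAnn : y ∈ Module.annihilator T (M ⧸ Vy) := by
        rw [hannq]
        intro m
        exact Submodule.mem_sup_right (Submodule.mem_map_of_mem Submodule.mem_top)
      have hlt : I < Module.annihilator T (M ⧸ Vy) := by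
        apply lt_of_le_of_ne
        · rw [← hIV]
          intro a ha
          rw [hannq] at ha ⊢
          exact fun m => Submodule.mem_sup_left (ha m)
        · intro heq
          apply hy 1
          rw [pow_one, heq]
          exact hyAnn
      exact hmax _ ⟨Vy, hne', rfl⟩ hlt
    intro mq
    obtain ⟨m, rfl⟩ := Submodule.Quotient.mk_surjective _ mq
    have hm : m ∈ Vy := htop ▸ Submodule.mem_top
    obtain ⟨v, hv, z, hz, rfl⟩ := Submodule.mem_sup.mp hm
    obtain ⟨w, -, rfl⟩ := hz
    refine ⟨Submodule.Quotient.mk w, ?_⟩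
    show y • (Submodule.Quotient.mk w : M ⧸ V) = _
    rw [← Submodule.Quotient.mk_smul, Submodule.Quotient.eq, LinearMap.lsmul_apply]
    have : y • w - (v + y • w) = -v := by abel
    rw [this]
    exact V.neg_mem hv
  refine ⟨Ideal.radical I, V, hV, ?_, ?_, ?_⟩
  · -- radical is prime
    rw [Ideal.isPrime_iff]
    constructor
    · intro htop'
      have h1 : (1 : T) ∈ I := by
        have h1r : (1 : T) ∈ Ideal.radical I := htop' ▸ Submodule.mem_top
        obtain ⟨n, hn⟩ := Ideal.mem_radical_iff.mp h1r
        simpa using hn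
      apply hV
      rw [eq_top_iff]
      intro m _
      have hm := (hannq V 1).mp (by rw [hIV]; exact h1) m
      simpa using hm
    · intro a b hab
      by_contra hcon
      push_neg at hcon
      obtain ⟨ha, hb⟩ := hcon
      have hsa : Function.Surjective (fun m : M ⧸ V => a • m) :=
        hdich a (fun u hu => ha (Ideal.mem_radical_iff.mpr ⟨u, hu⟩))
      have hsb : Function.Surjective (fun m : M ⧸ V => b • m) :=
        hdich b (fun u hu => hb (Ideal.mem_radical_iff.mpr ⟨u, hu⟩))
      obtain ⟨u, hu⟩ := Ideal.mem_radical_iff.mp hab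
      have hkill : ∀ mq : M ⧸ V, (a * b) ^ u • mq = 0 := by
        intro mq
        have : (a * b) ^ u ∈ Module.annihilator T (M ⧸ V) := by rw [hIV]; exact hu
        exact Module.mem_annihilator.mp this mq
      have hs : Function.Surjective (fun mq : M ⧸ V => (a * b) ^ u • mq) :=
        smul_surj_pow _ (smul_surj_mul _ _ hsa hsb) u
      apply hV
      rw [eq_top_iff]
      intro m _
      rw [← Submodule.Quotient.mk_eq_zero]
      obtain ⟨w, hw⟩ := hs (Submodule.Quotient.mk m)
      rw [← hw]
      exact hkill w
  · rw [hIV]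
  · intro y
    by_cases hy : ∃ u : ℕ, y ^ u ∈ I
    · right
      obtain ⟨u, hu⟩ := hy
      refine ⟨u, fun mq => ?_⟩
      have : y ^ u ∈ Module.annihilator T (M ⧸ V) := by rw [hIV]; exact hu
      exact Module.mem_annihilator.mp this mq
    · left
      push_neg at hy
      exact hdich y hy

end Helpers

section TensorHelpers

variable {R S : Type} [CommRing R] [CommRing S] [Algebra R S]

lemma algebraMap_smul_tmul {A : Type} [AddCommGroup A] [Module R A] (x : R) (s : S) (a : A) :
    (algebraMap R S x) • (s ⊗ₜ[R] a) = s ⊗ₜ[R] (x • a) := by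
  rw [TensorProduct.smul_tmul', algebraMap_smul, TensorProduct.smul_tmul]

lemma surj_smul_tensor {A : Type} [AddCommGroup A] [Module R A] (x : R)
    (h : Function.Surjective (fun a : A => x • a)) :
    Function.Surjective (fun v : S ⊗[R] A => (algebraMap R S x) • v) := by
  intro v
  induction v using TensorProduct.induction_on with
  | zero => exact ⟨0, smul_zero _⟩
  | tmul s a =>
      obtain ⟨a', ha'⟩ := h a
      refine ⟨s ⊗ₜ a', ?_⟩
      show (algebraMap R S x) • (s ⊗ₜ[R] a') = s ⊗ₜ[R] a
      rw [algebraMap_smul_tmul, show x • a' = a from ha']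
  | add v w hv hw =>
      obtain ⟨v', hv'⟩ := hv
      obtain ⟨w', hw'⟩ := hw
      refine ⟨v' + w', ?_⟩
      show (algebraMap R S x) • (v' + w') = v + w
      rw [smul_add]
      rw [show (algebraMap R S x) • v' = v from hv', show (algebraMap R S x) • w' = w from hw']

lemma kill_smul_tensor {A : Type} [AddCommGroup A] [Module R A] (x : R)
    (h : ∀ a : A, x • a = 0) (v : S ⊗[R] A) : (algebraMap R S x) • v = 0 := by
  induction v using TensorProduct.induction_on with
  | zero => exact smul_zero _
  | tmul s a => rw [algebraMap_smul_tmul, h, TensorProduct.tmul_zero]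
  | add v w hv hw => rw [smul_add, hv, hw, add_zero]

end TensorHelpers


/-- If `R → S` is a flat local homomorphism of Noetherian local rings with
`dim (S/mS) = 0` and `A` is an Artinian `R`-module, then
`Att_R A = { P ∩ R : P ∈ Att_S (S ⊗_R A) }`. -/
theorem stmt5 (R : Type) [CommRing R] [IsNoetherianRing R] [IsLocalRing R]
    (S : Type) [CommRing S] [IsNoetherianRing S] [IsLocalRing S]
    [Algebra R S] [Module.Flat R S] [IsLocalHom (algebraMap R S)]
    (hfib : ringKrullDim (S ⧸ (maximalIdeal R).map (algebraMap R S)) = 0)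
    (A : Type) [AddCommGroup A] [Module R A] [IsArtinian R A] :
    attachedPrimes R A =
      (fun P => P.comap (algebraMap R S)) '' attachedPrimes S (S ⊗[R] A) := by
  apply Set.Subset.antisymm
  · -- ⊆ : every attached prime of A is the contraction of an attached prime of S ⊗ A
    rintro p ⟨hp, N, hsec⟩
    -- Q := A ⧸ N is p-secondary
    have hradQ : (Module.annihilator R (A ⧸ N)).radical = p := hsec.1
    haveI hQnt : Nontrivial (A ⧸ N) := by
      by_contra hcon
      rw [not_nontrivial_iff_subsingleton] at hcon
      have h1 : (1 : R) ∈ Module.annihilator R (A ⧸ N) := by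
        rw [Module.mem_annihilator]
        intro m
        exact Subsingleton.elim _ _
      apply hp.ne_top
      rw [← hradQ, Ideal.eq_top_iff_one]
      exact Ideal.le_radical h1
    -- p ^ k kills Q
    obtain ⟨k, hk⟩ := Ideal.exists_radical_pow_le_of_fg (Module.annihilator R (A ⧸ N))
      (IsNoetherian.noetherian _)
    rw [hradQ] at hk
    -- S ⊗ Q is nontrivial (faithful flatness)
    haveI hSQnt : Nontrivial (S ⊗[R] (A ⧸ N)) := by
      obtain ⟨q, hq⟩ := exists_ne (0 : A ⧸ N)
      set f := LinearMap.toSpanSingleton R (A ⧸ N) q with hf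
      set I : Ideal R := LinearMap.ker f with hI
      have hIn : ∀ r ∈ I, algebraMap R S r ∈ maximalIdeal S := by
        intro r hr
        rw [IsLocalRing.mem_maximalIdeal]
        intro hunit
        have hru : IsUnit r := ‹IsLocalHom (algebraMap R S)›.map_nonunit r hunit
        have hr0 : r • q = 0 := by
          have := LinearMap.mem_ker.mp hr
          rwa [hf, LinearMap.toSpanSingleton_apply] at this
        apply hq
        obtain ⟨u, rfl⟩ := hru
        calc q = ((↑u⁻¹ : R) * ↑u) • q := by simp
          _ = (↑u⁻¹ : R) • ((u : R) • q) := by rw [mul_smul]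
          _ = 0 := by rw [hr0, smul_zero]
      -- I • ⊤ ≤ maximal ideal of S (as R-submodule)
      have hsmul_le : I • (⊤ : Submodule R S) ≤
          (Submodule.restrictScalars R ((maximalIdeal S).restrictScalars S)) := by
        rw [Submodule.smul_le]
        intro r hr s _
        show r • s ∈ maximalIdeal S
        rw [Algebra.smul_def]
        exact Ideal.mul_mem_right _ _ (hIn r hr)
      haveI : Nontrivial (S ⧸ (I • (⊤ : Submodule R S))) := by
        apply Submodule.Quotient.nontrivial_iff.mpr
        apply ne_of_lt
        apply lt_of_le_of_lt (le_trans hsmul_le (le_refl _))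
        rw [lt_top_iff_ne_top]
        intro htop
        have h1 : (1 : S) ∈ maximalIdeal S := by
          have : (1 : S) ∈ (Submodule.restrictScalars R ((maximalIdeal S).restrictScalars S)) :=
            htop ▸ Submodule.mem_top
          exact this
        exact (maximalIdeal.isMaximal S).ne_top ((Ideal.eq_top_iff_one _).mpr h1)
      haveI : Nontrivial (S ⊗[R] (R ⧸ I)) :=
        (tensorQuotEquivQuotSMul S I).toEquiv.nontrivial
      -- g : R ⧸ I ↪ Q
      have hg : Function.Injective (I.liftQ f (le_refl _)) := by
        rw [← LinearMap.ker_eq_bot, Submodule.ker_liftQ_eq_bot]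
        exact le_refl _
      have hinj : Function.Injective (LinearMap.lTensor S (I.liftQ f (le_refl _))) :=
        Module.Flat.lTensor_preserves_injective_linearMap _ hg
      exact hinj.nontrivial
    -- get an attached prime of S ⊗ Q
    obtain ⟨P, V, hVne, hPp, hPsec⟩ := exists_attached_isSecondary (T := S) (S ⊗[R] (A ⧸ N))
    -- surjectivity of the base-changed projection
    have hbsurj : Function.Surjective (LinearMap.baseChange S N.mkQ) := by
      intro v
      induction v using TensorProduct.induction_on with
      | zero => exact ⟨0, map_zero _⟩
      | tmul s qq =>
          obtain ⟨a, rfl⟩ := Submodule.Quotient.mk_surjective _ qq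
          exact ⟨s ⊗ₜ a, by rw [LinearMap.baseChange_tmul]; rfl⟩
      | add v w hv hw =>
          obtain ⟨v', hv'⟩ := hv
          obtain ⟨w', hw'⟩ := hw
          exact ⟨v' + w', by rw [map_add, hv', hw']⟩
    have hPatt : P ∈ attachedPrimes S (S ⊗[R] A) :=
      attachedPrimes_subset_of_surjective _ hbsurj ⟨hPp, V, hPsec⟩
    refine ⟨P, hPatt, ?_⟩
    show P.comap (algebraMap R S) = p
    apply le_antisymm
    · -- contraction is contained in p
      intro x hx
      by_contra hxp
      rw [Ideal.mem_comap, ← hPsec.1] at hx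
      obtain ⟨u, hu⟩ := Ideal.mem_radical_iff.mp hx
      rw [Module.mem_annihilator] at hu
      have hxu : x ^ u ∉ p := fun h => hxp (hp.mem_of_pow_mem u h)
      have hsurQ : Function.Surjective (fun qq : A ⧸ N => x ^ u • qq) := by
        rcases hsec.2 (x ^ u) with h | ⟨w, hw⟩
        · exact h
        · exfalso
          apply hxu
          rw [← hradQ]
          refine Ideal.mem_radical_iff.mpr ⟨w, ?_⟩
          rw [← pow_mul, Module.mem_annihilator]
          intro m
          have := hw m
          rwa [← pow_mul] at this
      have hsurM := surj_smul_tensor (S := S) _ hsurQ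
      apply hVne
      rw [eq_top_iff]
      intro v _
      rw [← Submodule.Quotient.mk_eq_zero]
      obtain ⟨w, hw⟩ := hsurM v
      have hw' : (algebraMap R S (x ^ u)) • w = v := hw
      calc Submodule.Quotient.mk v
          = Submodule.Quotient.mk ((algebraMap R S (x ^ u)) • w) := by rw [hw']
        _ = (algebraMap R S (x ^ u)) • (Submodule.Quotient.mk w : (S ⊗[R] (A ⧸ N)) ⧸ V) := by
            rw [Submodule.Quotient.mk_smul]
        _ = (algebraMap R S x) ^ u • (Submodule.Quotient.mk w : (S ⊗[R] (A ⧸ N)) ⧸ V) := by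
            rw [map_pow]
        _ = 0 := hu _
    · -- p is contained in the contraction
      intro x hx
      rw [Ideal.mem_comap]
      have hxk : x ^ k ∈ Module.annihilator R (A ⧸ N) := hk (Ideal.pow_mem_pow hx k)
      rw [Module.mem_annihilator] at hxk
      have hkills : (algebraMap R S x) ^ k ∈ Module.annihilator S ((S ⊗[R] (A ⧸ N)) ⧸ V) := by
        rw [Module.mem_annihilator]
        intro mq
        obtain ⟨v, rfl⟩ := Submodule.Quotient.mk_surjective _ mq
        rw [← map_pow, ← Submodule.Quotient.mk_smul,
          kill_smul_tensor _ hxk v, Submodule.Quotient.mk_zero]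
      exact hPp.mem_of_pow_mem k (by rw [← hPsec.1]; exact Ideal.le_radical hkills)
  · -- ⊇ : every contraction of an attached prime of S ⊗ A is attached to A
    rintro x ⟨P, ⟨hPp, N, hsN⟩, rfl⟩
    show P.comap (algebraMap R S) ∈ attachedPrimes R A
    set K : Submodule R A :=
      Submodule.comap ((TensorProduct.mk R S A) 1) (N.restrictScalars R) with hK
    have hmem : ∀ a : R, a ∈ Module.annihilator R (A ⧸ K) ↔
        algebraMap R S a ∈ Module.annihilator S ((S ⊗[R] A) ⧸ N) := by
      intro a
      rw [Module.mem_annihilator, Module.mem_annihilator]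
      constructor
      · intro h v
        obtain ⟨w, rfl⟩ := Submodule.Quotient.mk_surjective _ v
        rw [← Submodule.Quotient.mk_smul, Submodule.Quotient.mk_eq_zero]
        have hbase : ∀ b : A, ((1 : S) ⊗ₜ[R] (a • b) : S ⊗[R] A) ∈ N := by
          intro b
          have hb := h (Submodule.Quotient.mk b)
          rw [← Submodule.Quotient.mk_smul, Submodule.Quotient.mk_eq_zero] at hb
          exact hb
        have hNmem : ∀ w : S ⊗[R] A, (algebraMap R S a) • w ∈ N := by
          intro w
          induction w using TensorProduct.induction_on with
          | zero => rw [smul_zero]; exact N.zero_mem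
          | tmul s b =>
              rw [algebraMap_smul_tmul]
              have hsb : (s ⊗ₜ[R] (a • b) : S ⊗[R] A) = s • ((1 : S) ⊗ₜ[R] (a • b)) := by
                rw [TensorProduct.smul_tmul', smul_eq_mul, mul_one]
              rw [hsb]
              exact N.smul_mem s (hbase b)
          | add v w hv hw =>
              rw [smul_add]
              exact N.add_mem hv hw
        exact hNmem w
      · intro h bq
        obtain ⟨b, rfl⟩ := Submodule.Quotient.mk_surjective _ bq
        rw [← Submodule.Quotient.mk_smul, Submodule.Quotient.mk_eq_zero]
        show ((TensorProduct.mk R S A) 1) (a • b) ∈ N.restrictScalars R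
        have h1 : ((1 : S) ⊗ₜ[R] (a • b) : S ⊗[R] A) = algebraMap R S a • ((1 : S) ⊗ₜ[R] b) := by
          rw [algebraMap_smul_tmul]
        have h2 := h (Submodule.Quotient.mk ((1 : S) ⊗ₜ[R] b))
        rw [← Submodule.Quotient.mk_smul, Submodule.Quotient.mk_eq_zero] at h2
        show ((1 : S) ⊗ₜ[R] (a • b) : S ⊗[R] A) ∈ N
        rw [h1]
        exact h2
    have hrad : (Module.annihilator R (A ⧸ K)).radical = P.comap (algebraMap R S) := by
      have hann : Module.annihilator R (A ⧸ K) =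
          (Module.annihilator S ((S ⊗[R] A) ⧸ N)).comap (algebraMap R S) := by
        ext a
        rw [Ideal.mem_comap]
        exact hmem a
      rw [hann, ← Ideal.comap_radical, hsN.1]
    exact attachedPrimes_subset_of_surjective K.mkQ K.mkQ_surjective
      (attached_of_radical_eq_prime (hPp.comap _) hrad)

end
end

section
/- Let A be a p-secondary Artinian R-module and φ: R → S a faithfully flat local homomorphism of Noetherian local rings with dim(S/mS) = 0. Then every attached prime Q of the S-module A ⊗_R S satisfies Q ∩ R = p. -/
open IsLocalRing TensorProduct

noncomputable section

/-- If `A` is a `p`-secondary Artinian `R`-module and `R → S` is a faithfully flat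
local homomorphism of Noetherian local rings with zero-dimensional closed fiber,
then every attached prime `Q` of the `S`-module `S ⊗_R A` contracts to `p`. -/
theorem stmt6 (R : Type) [CommRing R] [IsNoetherianRing R] [IsLocalRing R]
    (S : Type) [CommRing S] [IsNoetherianRing S] [IsLocalRing S]
    [Algebra R S] [Module.FaithfullyFlat R S] [IsLocalHom (algebraMap R S)]
    (hfib : ringKrullDim (S ⧸ (maximalIdeal R).map (algebraMap R S)) = 0)
    (A : Type) [AddCommGroup A] [Module R A] [IsArtinian R A]
    (p : Ideal R) (hp : p.IsPrime) (hsec : IsSecondary R A p) :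
    ∀ Q ∈ attachedPrimes S (S ⊗[R] A), Q.comap (algebraMap R S) = p := by
  rintro Q ⟨hQ, N, hradQ, hsecQ⟩
  obtain ⟨hradp, hsecA⟩ := hsec
  -- Quotient module
  set M' := (S ⊗[R] A) ⧸ N with hM'
  ext r
  simp only [Ideal.mem_comap]
  constructor
  · -- φ(r) ∈ Q → r ∈ p
    intro hrQ
    by_contra hrp
    -- r acts surjectively on A
    have hsur : Function.Surjective (fun m : A => r • m) := by
      rcases hsecA r with h | ⟨n, hn⟩
      · exact h
      · exact absurd (hradp ▸ ⟨n, Module.mem_annihilator.mpr hn⟩) hrp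
    -- hence r acts surjectively on S ⊗ A
    have hsur2 : Function.Surjective (fun t : S ⊗[R] A => r • t) := by
      intro t
      induction t using TensorProduct.induction_on with
      | zero => exact ⟨0, smul_zero r⟩
      | tmul s a =>
        obtain ⟨a', ha'⟩ := hsur a
        exact ⟨s ⊗ₜ a', by simp only [← ha', tmul_smul]⟩
      | add u v hu hv =>
        obtain ⟨u', hu'⟩ := hu
        obtain ⟨v', hv'⟩ := hv
        exact ⟨u' + v', by simp only [smul_add, hu', hv']⟩
    -- hence φ(r) acts surjectively on M'
    have hsur3 : Function.Surjective (fun m : M' => algebraMap R S r • m) := by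
      intro m
      obtain ⟨t, rfl⟩ := Submodule.Quotient.mk_surjective N m
      obtain ⟨t', ht'⟩ := hsur2 t
      refine ⟨Submodule.Quotient.mk t', ?_⟩
      show algebraMap R S r • (Submodule.Quotient.mk t' : M') = _
      rw [← Submodule.Quotient.mk_smul, algebraMap_smul]
      exact congrArg _ ht'
    -- powers of φ(r) act surjectively on M'
    have hpow : ∀ n : ℕ, Function.Surjective (fun m : M' => (algebraMap R S r) ^ n • m) := by
      intro n
      induction n with
      | zero => exact fun m => ⟨m, by simp⟩
      | succ n ih =>
        intro m
        obtain ⟨m2, hm2⟩ := ih m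
        obtain ⟨m1, hm1⟩ := hsur3 m2
        exact ⟨m1, by simp only [pow_succ, mul_smul, hm1, hm2]⟩
    -- φ(r) ∈ Q = rad(Ann M'), so some power annihilates M'
    obtain ⟨n, hn⟩ := (hradQ ▸ hrQ : algebraMap R S r ∈ (Module.annihilator S M').radical)
    have hann := Module.mem_annihilator.mp hn
    -- then M' = 0
    have hzero : ∀ m : M', m = 0 := by
      intro m
      obtain ⟨m', hm'⟩ := hpow n m
      rw [← hm']
      exact hann m'
    -- so Ann M' = ⊤, contradicting primality of Q
    have : (1 : S) ∈ (Module.annihilator S M').radical :=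
      Ideal.le_radical (Module.mem_annihilator.mpr (fun m => by rw [hzero (1 • m)]))
    exact hQ.ne_top (Ideal.eq_top_iff_one Q |>.mpr (hradQ ▸ this))
  · -- r ∈ p → φ(r) ∈ Q
    intro hrp
    obtain ⟨n, hn⟩ := (hradp ▸ hrp : r ∈ (Module.annihilator R A).radical)
    have hannA := Module.mem_annihilator.mp hn
    rw [← hradQ]
    refine ⟨n, Module.mem_annihilator.mpr fun m => ?_⟩
    obtain ⟨t, rfl⟩ := Submodule.Quotient.mk_surjective N m
    show (algebraMap R S r) ^ n • (Submodule.Quotient.mk t : M') = 0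
    rw [← map_pow, ← Submodule.Quotient.mk_smul, algebraMap_smul]
    have : (r ^ n) • t = 0 := by
      induction t using TensorProduct.induction_on with
      | zero => exact smul_zero _
      | tmul s a => rw [← tmul_smul, hannA a, tmul_zero]
      | add u v hu hv => rw [smul_add, hu, hv, add_zero]
    rw [this, Submodule.Quotient.mk_zero]
end
end
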